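/- Let λ, c, σ₁, σ₋₁ > 0, set a = λ³(σ₁²+σ₋₁²)/2, and let b(x) = c − λH₁(x/λ)·1_{x≥0} + λH₋₁(−x/λ)·1_{x<0}, where H₁, H₋₁: [0,∞) → [0,∞) are continuous with H₁(0) = H₋₁(0) = 0. Let π(x) = C₀·exp{−(1/a)·(−cx + λ²∫₀^{x/λ}H₁(u)du)} for x ≥ 0 and π(x) = C₀·exp{−(1/a)·(−cx + λ²∫₀^{−x/λ}H₋₁(u)du)} for x < 0, with C₀ > 0 such that π integrates to 1. Then for every f ∈ C²_c(ℝ), ∫_ℝ (a·f''(x) + b(x)·f'(x))·π(x) dx = 0. -/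

import Mathlib

open Set MeasureTheory intervalIntegral

/-- The candidate stationary density `π` annihilates the generator
`A f = a f'' + b f'` of the limit diffusion: `∫ (a f'' + b f') π = 0` for `f ∈ C²_c(ℝ)`. -/
theorem stmt_7 (lam c σ₁ σm1 C₀ : ℝ) (hlam : 0 < lam) (hc : 0 < c)
    (hσ₁ : 0 < σ₁) (hσm1 : 0 < σm1) (hC₀ : 0 < C₀)
    (H₁ Hm1 : ℝ → ℝ) (hH₁c : Continuous H₁) (hHm1c : Continuous Hm1)
    (hH₁0 : ∀ u ≥ (0:ℝ), 0 ≤ H₁ u) (hHm10 : ∀ u ≥ (0:ℝ), 0 ≤ Hm1 u)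
    (hH₁zero : H₁ 0 = 0) (hHm1zero : Hm1 0 = 0)
    (a : ℝ) (ha : a = lam ^ 3 * (σ₁ ^ 2 + σm1 ^ 2) / 2)
    (b : ℝ → ℝ)
    (hb : ∀ x, b x = if 0 ≤ x then c - lam * H₁ (x / lam) else c + lam * Hm1 (-x / lam))
    (π : ℝ → ℝ)
    (hπ : ∀ x, π x = C₀ *
      Real.exp (-(1 / a) *
        (-c * x +
          if 0 ≤ x then lam ^ 2 * ∫ u in (0:ℝ)..(x / lam), H₁ u
          else lam ^ 2 * ∫ u in (0:ℝ)..(-x / lam), Hm1 u)))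
    (hnorm : ∫ x : ℝ, π x = 1) :
    ∀ f : ℝ → ℝ, ContDiff ℝ 2 f → HasCompactSupport f →
      ∫ x : ℝ, (a * deriv (deriv f) x + b x * deriv f x) * π x = 0 := by
  intro f hf hsupp
  have ha' : 0 < a := by rw [ha]; positivity
  have hane : a ≠ 0 := ha'.ne'
  have hlne : lam ≠ 0 := hlam.ne'
  set φp : ℝ → ℝ := fun x =>
    C₀ * Real.exp (-(1/a) * (-c*x + lam^2 * ∫ u in (0:ℝ)..(x/lam), H₁ u)) with hφp
  set φm : ℝ → ℝ := fun x =>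
    C₀ * Real.exp (-(1/a) * (-c*x + lam^2 * ∫ u in (0:ℝ)..(-x/lam), Hm1 u)) with hφm
  -- derivatives of the integral terms
  have hFp : ∀ x, HasDerivAt (fun x => ∫ u in (0:ℝ)..(x/lam), H₁ u) (H₁ (x/lam) / lam) x := by
    intro x
    have h1 : HasDerivAt (fun y : ℝ => y / lam) (1/lam) x := by
      simpa using (hasDerivAt_id x).div_const lam
    have h2 : HasDerivAt (fun y => ∫ u in (0:ℝ)..y, H₁ u) (H₁ (x/lam)) (x/lam) :=
      intervalIntegral.integral_hasDerivAt_right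
        (hH₁c.intervalIntegrable _ _)
        (hH₁c.stronglyMeasurableAtFilter _ _)
        hH₁c.continuousAt
    simpa [div_eq_mul_inv, Function.comp_def] using h2.comp x h1
  have hFm : ∀ x, HasDerivAt (fun x => ∫ u in (0:ℝ)..(-x/lam), Hm1 u) (-(Hm1 (-x/lam) / lam)) x := by
    intro x
    have h1 : HasDerivAt (fun y : ℝ => -y / lam) (-(1/lam)) x := by
      simpa [neg_div] using ((hasDerivAt_id x).neg).div_const lam
    have h2 : HasDerivAt (fun y => ∫ u in (0:ℝ)..y, Hm1 u) (Hm1 (-x/lam)) (-x/lam) :=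
      intervalIntegral.integral_hasDerivAt_right
        (hHm1c.intervalIntegrable _ _)
        (hHm1c.stronglyMeasurableAtFilter _ _)
        hHm1c.continuousAt
    simpa [div_eq_mul_inv, Function.comp_def] using h2.comp x h1
  -- derivatives of φp, φm
  have hφp' : ∀ x, HasDerivAt φp ((c - lam * H₁ (x/lam)) / a * φp x) x := by
    intro x
    have h0 : HasDerivAt (fun x : ℝ => -c*x) (-c) x := by
      simpa using (hasDerivAt_id x).const_mul (-c)
    have hI : HasDerivAt (fun x => -(1/a) * (-c*x + lam^2 * ∫ u in (0:ℝ)..(x/lam), H₁ u))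
        (-(1/a) * (-c + lam^2 * (H₁ (x/lam)/lam))) x :=
      (h0.add ((hFp x).const_mul (lam^2))).const_mul (-(1/a))
    have h := (hI.exp).const_mul C₀
    refine h.congr_deriv ?_
    simp only [hφp]
    field_simp
    ring
  have hφm' : ∀ x, HasDerivAt φm ((c + lam * Hm1 (-x/lam)) / a * φm x) x := by
    intro x
    have h0 : HasDerivAt (fun x : ℝ => -c*x) (-c) x := by
      simpa using (hasDerivAt_id x).const_mul (-c)
    have hI : HasDerivAt (fun x => -(1/a) * (-c*x + lam^2 * ∫ u in (0:ℝ)..(-x/lam), Hm1 u))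
        (-(1/a) * (-c + lam^2 * (-(Hm1 (-x/lam)/lam)))) x :=
      (h0.add ((hFm x).const_mul (lam^2))).const_mul (-(1/a))
    have h := (hI.exp).const_mul C₀
    refine h.congr_deriv ?_
    simp only [hφm]
    field_simp
    ring
  -- π agrees with φp on [0,∞) and with φm on (-∞,0]
  have hπp : ∀ x, 0 ≤ x → π x = φp x := by
    intro x hx; rw [hπ x, if_pos hx]
  have hπm : ∀ x, x ≤ 0 → π x = φm x := by
    intro x hx
    rcases eq_or_lt_of_le hx with h | h
    · subst h
      rw [hπ 0, if_pos le_rfl]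
      simp [hφm]
    · rw [hπ x, if_neg (not_le.mpr h)]
  -- π is differentiable with a π' = b π
  have hπ' : ∀ x, HasDerivAt π (b x / a * π x) x := by
    intro x
    rcases lt_trichotomy x 0 with hx | hx | hx
    · have hev : π =ᶠ[nhds x] φm := by
        filter_upwards [Iio_mem_nhds hx] with y hy
        exact hπm y hy.le
      have heq : b x / a * π x = (c + lam * Hm1 (-x/lam)) / a * φm x := by
        rw [hb x, if_neg (not_le.mpr hx), hπm x hx.le]
      rw [heq]
      exact (hφm' x).congr_of_eventuallyEq hev
    · subst hx
      have h1 : HasDerivWithinAt π (b 0 / a * π 0) (Ici 0) 0 := by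
        have h := ((hφp' 0).hasDerivWithinAt (s := Ici 0)).congr
          (fun y hy => hπp y hy) (hπp 0 le_rfl)
        have heq : b 0 / a * π 0 = (c - lam * H₁ (0/lam)) / a * φp 0 := by
          rw [hb 0, if_pos le_rfl, hπp 0 le_rfl]
        rw [heq]; exact h
      have h2 : HasDerivWithinAt π (b 0 / a * π 0) (Iic 0) 0 := by
        have h := ((hφm' 0).hasDerivWithinAt (s := Iic 0)).congr
          (fun y hy => hπm y hy) (hπm 0 le_rfl)
        have heq : b 0 / a * π 0 = (c + lam * Hm1 (-0/lam)) / a * φm 0 := by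
          rw [hb 0, if_pos le_rfl, hπm 0 le_rfl]
          norm_num [hH₁zero, hHm1zero]
        rw [heq]; exact h
      have h3 := h2.union h1
      rw [Iic_union_Ici] at h3
      exact hasDerivWithinAt_univ.mp h3
    · have hev : π =ᶠ[nhds x] φp := by
        filter_upwards [Ioi_mem_nhds hx] with y hy
        exact hπp y hy.le
      have heq : b x / a * π x = (c - lam * H₁ (x/lam)) / a * φp x := by
        rw [hb x, if_pos hx.le, hπp x hx.le]
      rw [heq]
      exact (hφp' x).congr_of_eventuallyEq hev
  have hπcont : Continuous π := by
    have : Differentiable ℝ π := fun x => (hπ' x).differentiableAt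
    exact this.continuous
  -- b is continuous
  have hbc : Continuous b := by
    have hbeq : b = fun x =>
        if (0:ℝ) ≤ x then c - lam * H₁ (x / lam) else c + lam * Hm1 (-x / lam) := funext hb
    rw [hbeq]
    apply Continuous.if_le
    · exact continuous_const.sub (continuous_const.mul (hH₁c.comp (continuous_id.div_const lam)))
    · exact continuous_const.add (continuous_const.mul (hHm1c.comp (continuous_id.neg.div_const lam)))
    · exact continuous_const
    · exact continuous_id
    · intro x hx
      rw [← hx]
      norm_num [hH₁zero, hHm1zero]
  -- facts about f
  have h2f := contDiff_succ_iff_deriv.mp (show ContDiff ℝ (1+1) f by norm_num; exact hf)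
  have h1f := contDiff_one_iff_deriv.mp h2f.2.2
  have hf'd : Differentiable ℝ (deriv f) := h1f.1
  have hf''c : Continuous (deriv (deriv f)) := h1f.2
  have hf'c : Continuous (deriv f) := hf'd.continuous
  have hsupp' : HasCompactSupport (deriv f) := hsupp.deriv
  -- the key function g = f' π and its derivative G
  set g : ℝ → ℝ := fun x => deriv f x * π x with hgdef
  set G : ℝ → ℝ := fun x => deriv (deriv f) x * π x + deriv f x * (b x / a * π x) with hGdef
  have hg' : ∀ x, HasDerivAt g (G x) x := fun x => ((hf'd x).hasDerivAt).mul (hπ' x)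
  have hGc : Continuous G :=
    (hf''c.mul hπcont).add (hf'c.mul ((hbc.div_const a).mul hπcont))
  have hint : ∀ x, (a * deriv (deriv f) x + b x * deriv f x) * π x = a * G x := by
    intro x
    simp only [hGdef]
    field_simp
  -- choose a big interval containing the support
  obtain ⟨R, hRpos, hR⟩ := hsupp'.isBounded.subset_closedBall_lt 0 0
  set S : ℝ := R + 1 with hS
  have hsub : tsupport (deriv f) ⊆ Ioo (-S) S := by
    intro x hx
    have := hR hx
    rw [Real.closedBall_eq_Icc] at this
    obtain ⟨h1, h2⟩ := this
    constructor <;> [skip; skip] <;> simp only [hS] <;> linarith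
  have hnm : ∀ x ∉ Ioo (-S) S, x ∉ tsupport (deriv f) := fun x hx h => hx (hsub h)
  have hGzero : ∀ x ∉ Ioo (-S) S, G x = 0 := by
    intro x hx
    have h1 : deriv f x = 0 := image_eq_zero_of_notMem_tsupport (hnm x hx)
    have h2 : deriv (deriv f) x = 0 := by
      by_contra hne
      exact hnm x hx (support_deriv_subset hne)
    simp [hGdef, h1, h2]
  have hSS : -S < S := by simp only [hS]; linarith
  have e1 : ∫ x : ℝ, G x = ∫ x in Ioo (-S) S, G x :=
    (setIntegral_eq_integral_of_forall_compl_eq_zero hGzero).symm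
  have e2 : ∫ x in (-S)..S, G x = ∫ x in Ioo (-S) S, G x := by
    rw [intervalIntegral.integral_of_le hSS.le, MeasureTheory.integral_Ioc_eq_integral_Ioo]
  have e3 : ∫ x in (-S)..S, G x = g S - g (-S) :=
    intervalIntegral.integral_eq_sub_of_hasDerivAt (fun x _ => hg' x)
      (hGc.intervalIntegrable _ _)
  have hgS : g S = 0 := by
    have : deriv f S = 0 :=
      image_eq_zero_of_notMem_tsupport (hnm S (fun h => absurd h.2 (lt_irrefl S)))
    simp [hgdef, this]
  have hgmS : g (-S) = 0 := by
    have : deriv f (-S) = 0 :=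
      image_eq_zero_of_notMem_tsupport (hnm (-S) (fun h => absurd h.1 (lt_irrefl (-S))))
    simp [hgdef, this]
  calc ∫ x : ℝ, (a * deriv (deriv f) x + b x * deriv f x) * π x
      = ∫ x : ℝ, a * G x := by simp_rw [hint]
    _ = a * ∫ x : ℝ, G x := integral_const_mul a G
    _ = 0 := by rw [e1, ← e2, e3, hgS, hgmS]; ring
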